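/- Let K be a complete nonarchimedean field of characteristic zero containing Q_p with |p| = p^{-1}. The ring E_K of formal Laurent series F(Z) = Σ_{n∈Z} a_n Z^n with a_n ∈ K, sup_n |a_n| < ∞ and a_n → 0 as n → -∞, equipped with ‖F‖ = sup_{n∈Z} |a_n|, is a normed ring whose norm is multiplicative: ‖FG‖ = ‖F‖·‖G‖ for all F, G. -/

import Mathlib

open Filter

/-- If `a * ρ^i = b * ρ^j` with `a, b > 0` and `i ≠ j`, then `ρ` is uniquely
determined among positive reals. -/
private lemma gauss_tie_subsingleton {a b : ℝ} (ha : 0 < a) (hb : 0 < b) {i j : ℤ}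
    (hij : i ≠ j) :
    Set.Subsingleton {ρ : ℝ | 0 < ρ ∧ a * ρ ^ i = b * ρ ^ j} := by
  have key : ∀ x : ℝ, 0 < x → a * x ^ i = b * x ^ j →
      Real.log x * ((i : ℝ) - (j : ℝ)) = Real.log b - Real.log a := by
    intro x hx0 hxe
    have hxi : (0:ℝ) < x ^ i := zpow_pos hx0 _
    have hxj : (0:ℝ) < x ^ j := zpow_pos hx0 _
    have hlog := congrArg Real.log hxe
    rw [Real.log_mul ha.ne' hxi.ne', Real.log_mul hb.ne' hxj.ne',
        Real.log_zpow, Real.log_zpow] at hlog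
    ring_nf
    ring_nf at hlog
    linarith
  intro x hx y hy
  have hijR : ((i : ℝ) - (j : ℝ)) ≠ 0 := by
    have : (i : ℝ) ≠ (j : ℝ) := by exact_mod_cast hij
    simpa [sub_eq_zero] using this
  have h1 := key x hx.1 hx.2
  have h2 := key y hy.1 hy.2
  have hlogeq : Real.log x = Real.log y :=
    mul_right_cancel₀ hijR (h1.trans h2.symm)
  exact Real.log_injOn_pos (Set.mem_Ioi.mpr hx.1) (Set.mem_Ioi.mpr hy.1) hlogeq

theorem gauss_norm_multiplicative
    (p : ℕ) [Fact p.Prime]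
    (K : Type*) [NontriviallyNormedField K] [NormedAlgebra ℚ_[p] K]
    [IsUltrametricDist K] [CompleteSpace K] [CharZero K]
    (f g : ℤ → K)
    (hfb : BddAbove (Set.range fun n => ‖f n‖))
    (hgb : BddAbove (Set.range fun n => ‖g n‖))
    (hf0 : Tendsto f atBot (nhds 0))
    (hg0 : Tendsto g atBot (nhds 0)) :
    (⨆ n : ℤ, ‖∑' i : ℤ, f i * g (n - i)‖)
      = (⨆ n : ℤ, ‖f n‖) * (⨆ n : ℤ, ‖g n‖) := by
  set A : ℝ := ⨆ n : ℤ, ‖f n‖ with hAdef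
  set B : ℝ := ⨆ n : ℤ, ‖g n‖ with hBdef
  have hsA : ∀ i : ℤ, ‖f i‖ ≤ A := fun i => le_ciSup hfb i
  have htB : ∀ j : ℤ, ‖g j‖ ≤ B := fun j => le_ciSup hgb j
  have hA0 : 0 ≤ A := (norm_nonneg (f 0)).trans (hsA 0)
  have hB0 : 0 ≤ B := (norm_nonneg (g 0)).trans (htB 0)
  rcases hA0.eq_or_lt with hA | hA
  · have hf : ∀ i, f i = 0 := fun i => norm_le_zero_iff.mp ((hsA i).trans_eq hA.symm)
    simp only [hf, zero_mul, tsum_zero, norm_zero, ciSup_const, ← hA]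
  rcases hB0.eq_or_lt with hB | hB
  · have hg : ∀ j, g j = 0 := fun j => norm_le_zero_iff.mp ((htB j).trans_eq hB.symm)
    simp only [hg, mul_zero, tsum_zero, norm_zero, ciSup_const, ← hB]
  -- main case: 0 < A, 0 < B
  have hABpos : 0 < A * B := mul_pos hA hB
  have hupper : ∀ n : ℤ, ‖∑' i : ℤ, f i * g (n - i)‖ ≤ A * B := fun n =>
    IsUltrametricDist.norm_tsum_le_of_forall_le_of_nonneg hABpos.le fun i => by
      rw [norm_mul]
      exact mul_le_mul (hsA i) (htB _) (norm_nonneg _) hA0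
  have hhbdd : BddAbove (Set.range fun n : ℤ => ‖∑' i : ℤ, f i * g (n - i)‖) :=
    ⟨A * B, by rintro y ⟨n, rfl⟩; exact hupper n⟩
  apply le_antisymm (ciSup_le hupper)
  refine le_of_forall_lt fun c hc => ?_
  obtain ⟨n, hn⟩ : ∃ n : ℤ, c < ‖∑' i : ℤ, f i * g (n - i)‖ := by
    -- choose a slack factor u ∈ (0,1) with c < u^4 * (A*B)
    set q : ℝ := max (c / (A * B)) 0 with hqdef
    have hq1 : q < 1 := max_lt ((div_lt_one hABpos).mpr hc) one_pos
    have hq0 : 0 ≤ q := le_max_right _ _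
    have hcq : c ≤ q * (A * B) := by
      rcases le_total c 0 with h | h
      · exact h.trans (by positivity)
      · calc c = (c / (A * B)) * (A * B) := by field_simp
          _ ≤ q * (A * B) := mul_le_mul_of_nonneg_right (le_max_left _ _) hABpos.le
    set v : ℝ := (q + 1) / 2 with hvdef
    have hv0 : 0 < v := by rw [hvdef]; linarith
    have hv1 : v < 1 := by rw [hvdef]; linarith
    have hqv : q < v := by rw [hvdef]; linarith
    set u : ℝ := Real.sqrt (Real.sqrt v) with hudef
    have hsv0 : 0 < Real.sqrt v := Real.sqrt_pos.mpr hv0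
    have hu0 : 0 < u := Real.sqrt_pos.mpr hsv0
    have hu4 : u ^ 4 = v := by
      have h2 : u ^ 2 = Real.sqrt v := Real.sq_sqrt hsv0.le
      calc u ^ 4 = (u ^ 2) ^ 2 := by ring
        _ = v := by rw [h2]; exact Real.sq_sqrt hv0.le
    have hu1 : u < 1 := by
      have := hu4 ▸ hv1
      exact (pow_lt_one_iff_of_nonneg hu0.le (by norm_num)).mp this
    have hcu : c < u ^ 4 * (A * B) := by
      rw [hu4]
      exact hcq.trans_lt (mul_lt_mul_of_pos_right hqv hABpos)
    -- near-maximal coefficients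
    obtain ⟨iw, hiw⟩ : ∃ i : ℤ, u * A < ‖f i‖ :=
      exists_lt_of_lt_ciSup (show u * A < A from mul_lt_of_lt_one_left hA hu1)
    obtain ⟨jw, hjw⟩ : ∃ j : ℤ, u * B < ‖g j‖ :=
      exists_lt_of_lt_ciSup (show u * B < B from mul_lt_of_lt_one_left hB hu1)
    -- small-coefficient cutoffs
    have hmax0 : 0 < max A B := lt_of_lt_of_le hA (le_max_left A B)
    set κ : ℝ := u ^ 4 * (A * B) / (2 * max A B) with hκdef
    have hκ0 : 0 < κ := div_pos (by positivity) (by linarith)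
    have hκmax : κ * max A B = u ^ 4 * (A * B) / 2 := by
      rw [hκdef]; field_simp
    obtain ⟨Lf0, hLf0⟩ : ∃ L : ℤ, ∀ i ≤ L, ‖f i‖ < κ :=
      eventually_atBot.mp ((tendsto_zero_iff_norm_tendsto_zero.mp hf0).eventually
        (gt_mem_nhds hκ0))
    obtain ⟨Lg0, hLg0⟩ : ∃ L : ℤ, ∀ j ≤ L, ‖g j‖ < κ :=
      eventually_atBot.mp ((tendsto_zero_iff_norm_tendsto_zero.mp hg0).eventually
        (gt_mem_nhds hκ0))
    set Lf : ℤ := min Lf0 iw with hLfdef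
    set Lg : ℤ := min Lg0 jw with hLgdef
    have hLf : ∀ i : ℤ, i < Lf → ‖f i‖ < κ := fun i hi =>
      hLf0 i (le_of_lt (lt_of_lt_of_le hi (min_le_left _ _)))
    have hLg : ∀ j : ℤ, j < Lg → ‖g j‖ < κ := fun j hj =>
      hLg0 j (le_of_lt (lt_of_lt_of_le hj (min_le_left _ _)))
    have hLfiw : Lf ≤ iw := min_le_right _ _
    have hLgjw : Lg ≤ jw := min_le_right _ _
    -- the exponent bound and ρ₁
    set m : ℕ := max (iw - Lf).toNat (jw - Lg).toNat with hmdef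
    have hmf : iw - Lf ≤ (m : ℤ) :=
      (Int.self_le_toNat _).trans (by exact_mod_cast Nat.le_max_left _ _)
    have hmg : jw - Lg ≤ (m : ℤ) :=
      (Int.self_le_toNat _).trans (by exact_mod_cast Nat.le_max_right _ _)
    set ρ₁ : ℝ := 1 - (1 - u) / ((m : ℝ) + 1) with hρ₁def
    have hm1 : (0:ℝ) < (m : ℝ) + 1 := by positivity
    have hρ₁u : u ≤ ρ₁ := by
      have h1 : (1 - u) / ((m : ℝ) + 1) ≤ 1 - u :=
        div_le_self (by linarith) (by linarith)
      rw [hρ₁def]; linarith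
    have hρ₁0 : 0 < ρ₁ := lt_of_lt_of_le hu0 hρ₁u
    have hρ₁1 : ρ₁ < 1 := by
      have : 0 < (1 - u) / ((m : ℝ) + 1) := div_pos (by linarith) hm1
      rw [hρ₁def]; linarith
    -- choose ρ avoiding ties
    set BadF : Set ℝ := ⋃ pr : ℤ × ℤ, {ρ : ℝ | 0 < ρ ∧ pr.1 ≠ pr.2 ∧ 0 < ‖f pr.1‖ ∧
      0 < ‖f pr.2‖ ∧ ‖f pr.1‖ * ρ ^ pr.1 = ‖f pr.2‖ * ρ ^ pr.2} with hBadFdef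
    set BadG : Set ℝ := ⋃ pr : ℤ × ℤ, {ρ : ℝ | 0 < ρ ∧ pr.1 ≠ pr.2 ∧ 0 < ‖g pr.1‖ ∧
      0 < ‖g pr.2‖ ∧ ‖g pr.1‖ * ρ ^ pr.1 = ‖g pr.2‖ * ρ ^ pr.2} with hBadGdef
    have hBadFc : BadF.Countable := Set.countable_iUnion fun pr =>
      Set.Subsingleton.countable fun x hx y hy =>
        gauss_tie_subsingleton hx.2.2.1 hx.2.2.2.1 hx.2.1
          ⟨hx.1, hx.2.2.2.2⟩ ⟨hy.1, hy.2.2.2.2⟩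
    have hBadGc : BadG.Countable := Set.countable_iUnion fun pr =>
      Set.Subsingleton.countable fun x hx y hy =>
        gauss_tie_subsingleton hx.2.2.1 hx.2.2.2.1 hx.2.1
          ⟨hx.1, hx.2.2.2.2⟩ ⟨hy.1, hy.2.2.2.2⟩
    have hnots : ¬ (Set.Ioo ρ₁ 1 ⊆ BadF ∪ BadG) := by
      intro hsub
      have h1 : (Set.Ioo ρ₁ 1).Countable := (hBadFc.union hBadGc).mono hsub
      rw [← Cardinal.le_aleph0_iff_set_countable, Cardinal.mk_Ioo_real hρ₁1] at h1
      exact absurd h1 (not_le.mpr Cardinal.aleph0_lt_continuum)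
    obtain ⟨ρ, hρmem, hρbad⟩ := Set.not_subset.mp hnots
    obtain ⟨hρ₁ρ, hρ1⟩ := hρmem
    have hρ0 : 0 < ρ := hρ₁0.trans hρ₁ρ
    have htieF : ∀ i j : ℤ, i ≠ j → 0 < ‖f i‖ → 0 < ‖f j‖ →
        ‖f i‖ * ρ ^ i ≠ ‖f j‖ * ρ ^ j := by
      intro i j hij hi hj heq
      exact hρbad (Or.inl (Set.mem_iUnion.mpr ⟨(i, j), hρ0, hij, hi, hj, heq⟩))
    have htieG : ∀ i j : ℤ, i ≠ j → 0 < ‖g i‖ → 0 < ‖g j‖ →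
        ‖g i‖ * ρ ^ i ≠ ‖g j‖ * ρ ^ j := by
      intro i j hij hi hj heq
      exact hρbad (Or.inr (Set.mem_iUnion.mpr ⟨(i, j), hρ0, hij, hi, hj, heq⟩))
    have hρz : ∀ k : ℤ, (0:ℝ) < ρ ^ k := fun k => zpow_pos hρ0 k
    -- Bernoulli: u < ρ^m
    have hρm : u < ρ ^ (m : ℤ) := by
      have hber : (1:ℝ) + (m : ℝ) * (ρ - 1) ≤ ρ ^ (m : ℕ) := by
        have := one_add_mul_le_pow (a := ρ - 1) (by linarith) m
        simpa using this
      have hstep : (m : ℝ) * ((1 - u) / ((m : ℝ) + 1)) < 1 - u := by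
        have hfrac : (m : ℝ) / ((m : ℝ) + 1) < 1 := (div_lt_one hm1).mpr (by linarith)
        calc (m : ℝ) * ((1 - u) / ((m : ℝ) + 1))
            = ((m : ℝ) / ((m : ℝ) + 1)) * (1 - u) := by ring
          _ < 1 * (1 - u) := mul_lt_mul_of_pos_right hfrac (by linarith)
          _ = 1 - u := one_mul _
      have hρρ₁ : -((1 - u) / ((m : ℝ) + 1)) ≤ ρ - 1 := by
        have := hρ₁ρ; rw [hρ₁def] at this; linarith
      have h2 : -((m : ℝ) * ((1 - u) / ((m : ℝ) + 1))) ≤ (m : ℝ) * (ρ - 1) := by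
        calc -((m : ℝ) * ((1 - u) / ((m : ℝ) + 1)))
            = (m : ℝ) * (-((1 - u) / ((m : ℝ) + 1))) := by ring
          _ ≤ (m : ℝ) * (ρ - 1) := mul_le_mul_of_nonneg_left hρρ₁ (Nat.cast_nonneg m)
      have : u < ρ ^ (m : ℕ) := by linarith
      rwa [← zpow_natCast ρ m] at this
    -- the tilted coefficient functions
    set F : ℤ → ℝ := fun i => ‖f i‖ * ρ ^ i with hFdef
    set G : ℤ → ℝ := fun j => ‖g j‖ * ρ ^ j with hGdef
    have hF0 : ∀ i, 0 ≤ F i := fun i => mul_nonneg (norm_nonneg _) (hρz i).le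
    have hG0 : ∀ j, 0 ≤ G j := fun j => mul_nonneg (norm_nonneg _) (hρz j).le
    have hFw : 0 < F iw := mul_pos (lt_trans (by positivity) hiw) (hρz iw)
    have hGw : 0 < G jw := mul_pos (lt_trans (by positivity) hjw) (hρz jw)
    -- right cutoff and argmax for f
    obtain ⟨kf, hkf⟩ : ∃ k : ℕ, ρ ^ k < F iw / A :=
      exists_pow_lt_of_lt_one (div_pos hFw hA) hρ1
    set Rf : ℤ := max (kf : ℤ) iw with hRfdef
    have hRf : ∀ i : ℤ, Rf < i → F i < F iw := by
      intro i hi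
      have h2 : ρ ^ i ≤ ρ ^ (kf : ℤ) :=
        zpow_le_zpow_right_of_le_one₀ hρ0 hρ1.le (le_of_lt (lt_of_le_of_lt (le_max_left _ _) hi))
      calc F i ≤ A * ρ ^ i := mul_le_mul_of_nonneg_right (hsA i) (hρz i).le
        _ ≤ A * ρ ^ (kf : ℤ) := mul_le_mul_of_nonneg_left h2 hA.le
        _ = A * ρ ^ kf := by rw [zpow_natCast]
        _ < A * (F iw / A) := mul_lt_mul_of_pos_left hkf hA
        _ = F iw := by field_simp
    have hiwSf : iw ∈ Finset.Icc Lf Rf := Finset.mem_Icc.mpr ⟨hLfiw, le_max_right _ _⟩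
    obtain ⟨i₀, hi₀mem, hi₀max⟩ := Finset.exists_max_image (Finset.Icc Lf Rf) F ⟨iw, hiwSf⟩
    obtain ⟨hLfi₀, hi₀Rf⟩ := Finset.mem_Icc.mp hi₀mem
    have hFiwi₀ : F iw ≤ F i₀ := hi₀max iw hiwSf
    have hFi₀pos : 0 < F i₀ := lt_of_lt_of_le hFw hFiwi₀
    have hfi₀pos : 0 < ‖f i₀‖ := by
      rcases (norm_nonneg (f i₀)).lt_or_eq with h | h
      · exact h
      · exfalso; rw [hFdef] at hFi₀pos; simp only [← h] at hFi₀pos; simp at hFi₀pos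
    have hFstrict : ∀ i : ℤ, Lf ≤ i → i ≠ i₀ → F i < F i₀ := by
      intro i hLi hne
      rcases le_or_gt i Rf with hiR | hiR
      · rcases (hi₀max i (Finset.mem_Icc.mpr ⟨hLi, hiR⟩)).lt_or_eq with h | h
        · exact h
        · exfalso
          have hfipos : 0 < ‖f i‖ := by
            rcases (norm_nonneg (f i)).lt_or_eq with h' | h'
            · exact h'
            · exfalso
              have := hFi₀pos
              rw [← h, hFdef] at this
              simp only [← h'] at this; simp at this
          exact htieF i i₀ hne hfipos hfi₀pos h
      · exact lt_of_lt_of_le (hRf i hiR) hFiwi₀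
    -- right cutoff and argmax for g
    obtain ⟨kg, hkg⟩ : ∃ k : ℕ, ρ ^ k < G jw / B :=
      exists_pow_lt_of_lt_one (div_pos hGw hB) hρ1
    set Rg : ℤ := max (kg : ℤ) jw with hRgdef
    have hRg : ∀ j : ℤ, Rg < j → G j < G jw := by
      intro j hj
      have h2 : ρ ^ j ≤ ρ ^ (kg : ℤ) :=
        zpow_le_zpow_right_of_le_one₀ hρ0 hρ1.le (le_of_lt (lt_of_le_of_lt (le_max_left _ _) hj))
      calc G j ≤ B * ρ ^ j := mul_le_mul_of_nonneg_right (htB j) (hρz j).le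
        _ ≤ B * ρ ^ (kg : ℤ) := mul_le_mul_of_nonneg_left h2 hB.le
        _ = B * ρ ^ kg := by rw [zpow_natCast]
        _ < B * (G jw / B) := mul_lt_mul_of_pos_left hkg hB
        _ = G jw := by field_simp
    have hjwSg : jw ∈ Finset.Icc Lg Rg := Finset.mem_Icc.mpr ⟨hLgjw, le_max_right _ _⟩
    obtain ⟨j₀, hj₀mem, hj₀max⟩ := Finset.exists_max_image (Finset.Icc Lg Rg) G ⟨jw, hjwSg⟩
    obtain ⟨hLgj₀, hj₀Rg⟩ := Finset.mem_Icc.mp hj₀mem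
    have hGjwj₀ : G jw ≤ G j₀ := hj₀max jw hjwSg
    have hGj₀pos : 0 < G j₀ := lt_of_lt_of_le hGw hGjwj₀
    have hgj₀pos : 0 < ‖g j₀‖ := by
      rcases (norm_nonneg (g j₀)).lt_or_eq with h | h
      · exact h
      · exfalso; rw [hGdef] at hGj₀pos; simp only [← h] at hGj₀pos; simp at hGj₀pos
    have hGstrict : ∀ j : ℤ, Lg ≤ j → j ≠ j₀ → G j < G j₀ := by
      intro j hLj hne
      rcases le_or_gt j Rg with hjR | hjR
      · rcases (hj₀max j (Finset.mem_Icc.mpr ⟨hLj, hjR⟩)).lt_or_eq with h | h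
        · exact h
        · exfalso
          have hgjpos : 0 < ‖g j‖ := by
            rcases (norm_nonneg (g j)).lt_or_eq with h' | h'
            · exact h'
            · exfalso
              have := hGj₀pos
              rw [← h, hGdef] at this
              simp only [← h'] at this; simp at this
          exact htieG j j₀ hne hgjpos hgj₀pos h
      · exact lt_of_lt_of_le (hRg j hjR) hGjwj₀
    -- the chosen diagonal
    refine ⟨i₀ + j₀, ?_⟩
    set n : ℤ := i₀ + j₀ with hndef
    -- lower bounds for the leading coefficients
    have hsi₀ : u ^ 2 * A < ‖f i₀‖ := by
      have h1 : ‖f iw‖ * ρ ^ iw ≤ ‖f i₀‖ * ρ ^ i₀ := hFiwi₀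
      have h2 : ρ ^ (m : ℤ) ≤ ρ ^ (iw - i₀) :=
        zpow_le_zpow_right_of_le_one₀ hρ0 hρ1.le (by omega)
      have h3 : ‖f iw‖ * ρ ^ (iw - i₀) ≤ ‖f i₀‖ := by
        have e1 : ‖f iw‖ * ρ ^ (iw - i₀) = (‖f iw‖ * ρ ^ iw) / ρ ^ i₀ := by
          rw [zpow_sub₀ hρ0.ne']; ring
        rw [e1]
        rw [div_le_iff₀ (hρz i₀)]
        exact h1
      calc u ^ 2 * A = (u * A) * u := by ring
        _ < ‖f iw‖ * ρ ^ (m : ℤ) := by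
            apply mul_lt_mul'' hiw hρm (by positivity) hu0.le
        _ ≤ ‖f iw‖ * ρ ^ (iw - i₀) := mul_le_mul_of_nonneg_left h2 (norm_nonneg _)
        _ ≤ ‖f i₀‖ := h3
    have hsj₀ : u ^ 2 * B < ‖g j₀‖ := by
      have h1 : ‖g jw‖ * ρ ^ jw ≤ ‖g j₀‖ * ρ ^ j₀ := hGjwj₀
      have h2 : ρ ^ (m : ℤ) ≤ ρ ^ (jw - j₀) :=
        zpow_le_zpow_right_of_le_one₀ hρ0 hρ1.le (by omega)
      have h3 : ‖g jw‖ * ρ ^ (jw - j₀) ≤ ‖g j₀‖ := by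
        have e1 : ‖g jw‖ * ρ ^ (jw - j₀) = (‖g jw‖ * ρ ^ jw) / ρ ^ j₀ := by
          rw [zpow_sub₀ hρ0.ne']; ring
        rw [e1, div_le_iff₀ (hρz j₀)]
        exact h1
      calc u ^ 2 * B = (u * B) * u := by ring
        _ < ‖g jw‖ * ρ ^ (m : ℤ) := by
            apply mul_lt_mul'' hjw hρm (by positivity) hu0.le
        _ ≤ ‖g jw‖ * ρ ^ (jw - j₀) := mul_le_mul_of_nonneg_left h2 (norm_nonneg _)
        _ ≤ ‖g j₀‖ := h3
    have hmain : u ^ 4 * (A * B) < ‖f i₀‖ * ‖g j₀‖ := by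
      calc u ^ 4 * (A * B) = (u ^ 2 * A) * (u ^ 2 * B) := by ring
        _ < ‖f i₀‖ * ‖g j₀‖ := mul_lt_mul'' hsi₀ hsj₀ (by positivity) (by positivity)
    -- the dominating bound D for all non-leading terms
    have hi₀W : i₀ ∈ Finset.Icc Lf (n - Lg) := Finset.mem_Icc.mpr ⟨hLfi₀, by omega⟩
    set D : ℝ := (Finset.Icc Lf (n - Lg)).sup' ⟨i₀, hi₀W⟩
      (fun i => if i = i₀ then κ * max A B else ‖f i‖ * ‖g (n - i)‖) with hDdef
    have hκm : κ * max A B < ‖f i₀‖ * ‖g j₀‖ := by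
      rw [hκmax]
      have : 0 < u ^ 4 * (A * B) := by positivity
      linarith
    have hDge : κ * max A B ≤ D := by
      have h := Finset.le_sup' (fun i => if i = i₀ then κ * max A B
        else ‖f i‖ * ‖g (n - i)‖) hi₀W
      rw [if_pos rfl] at h
      rw [hDdef]
      exact h
    have hD0 : 0 ≤ D := le_trans (by positivity) hDge
    have hDlt : D < ‖f i₀‖ * ‖g j₀‖ := by
      rw [hDdef]
      refine (Finset.sup'_lt_iff ..).mpr ?_
      intro i hiW
      by_cases h : i = i₀
      · simpa [h] using hκm
      · simp only [if_neg h]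
        obtain ⟨h1, h2⟩ := Finset.mem_Icc.mp hiW
        have hGle : G (n - i) ≤ G j₀ := by
          by_cases hgi : n - i = j₀
          · rw [hgi]
          · exact (hGstrict (n - i) (by omega) hgi).le
        have hFlt : F i < F i₀ := hFstrict i h1 h
        have hzsplit : ∀ k : ℤ, ρ ^ n = ρ ^ k * ρ ^ (n - k) := fun k => by
          rw [← zpow_add₀ hρ0.ne', show k + (n - k) = n from by omega]
        have e1 : F i * G (n - i) = (‖f i‖ * ‖g (n - i)‖) * ρ ^ n := by
          rw [hFdef, hGdef, hzsplit i]; ring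
        have e2 : F i₀ * G j₀ = (‖f i₀‖ * ‖g j₀‖) * ρ ^ n := by
          rw [hFdef, hGdef, hzsplit i₀, show n - i₀ = j₀ from by omega]; ring
        have hcomb : (‖f i‖ * ‖g (n - i)‖) * ρ ^ n < (‖f i₀‖ * ‖g j₀‖) * ρ ^ n := by
          rw [← e1, ← e2]
          calc F i * G (n - i) ≤ F i * G j₀ :=
                mul_le_mul_of_nonneg_left hGle (hF0 i)
            _ < F i₀ * G j₀ := mul_lt_mul_of_pos_right hFlt hGj₀pos
        exact lt_of_mul_lt_mul_right (by exact hcomb) (hρz n).le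
    have hD2 : ∀ i : ℤ, i ≠ i₀ → ‖f i * g (n - i)‖ ≤ D := by
      intro i hne
      rw [norm_mul]
      by_cases hiW : i ∈ Finset.Icc Lf (n - Lg)
      · have e : ‖f i‖ * ‖g (n - i)‖ = (fun i => if i = i₀ then κ * max A B
          else ‖f i‖ * ‖g (n - i)‖) i := by simp [hne]
        rw [e, hDdef]
        exact Finset.le_sup' (fun i => if i = i₀ then κ * max A B
          else ‖f i‖ * ‖g (n - i)‖) hiW
      · rw [Finset.mem_Icc, not_and_or, not_le, not_le] at hiW
        rcases hiW with h | h
        · calc ‖f i‖ * ‖g (n - i)‖ ≤ κ * B :=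
              mul_le_mul (hLf i h).le (htB _) (norm_nonneg _) hκ0.le
            _ ≤ κ * max A B := mul_le_mul_of_nonneg_left (le_max_right _ _) hκ0.le
            _ ≤ D := hDge
        · calc ‖f i‖ * ‖g (n - i)‖ ≤ A * κ :=
              mul_le_mul (hsA i) (hLg _ (by omega)).le (norm_nonneg _) hA0
            _ = κ * A := mul_comm _ _
            _ ≤ κ * max A B := mul_le_mul_of_nonneg_left (le_max_left _ _) hκ0.le
            _ ≤ D := hDge
    -- summability of the Cauchy product terms
    have hsum : Summable (fun i : ℤ => f i * g (n - i)) := by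
      apply NonarchimedeanAddGroup.summable_of_tendsto_cofinite_zero
      rw [Int.cofinite_eq, tendsto_sup]
      constructor
      · have hbound : ∀ i : ℤ, ‖f i * g (n - i)‖ ≤ ‖f i‖ * B := fun i => by
          rw [norm_mul]
          exact mul_le_mul_of_nonneg_left (htB _) (norm_nonneg _)
        have htend : Tendsto (fun i : ℤ => ‖f i‖ * B) atBot (nhds 0) := by
          simpa using (tendsto_zero_iff_norm_tendsto_zero.mp hf0).mul_const B
        exact squeeze_zero_norm hbound htend
      · have hbound : ∀ i : ℤ, ‖f i * g (n - i)‖ ≤ A * ‖g (n - i)‖ := fun i => by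
          rw [norm_mul]
          exact mul_le_mul_of_nonneg_right (hsA _) (norm_nonneg _)
        have hcomp : Tendsto (fun i : ℤ => n - i) atTop atBot :=
          tendsto_atBot.mpr fun b => eventually_atTop.mpr ⟨n - b, fun i hi => by omega⟩
        have htend : Tendsto (fun i : ℤ => A * ‖g (n - i)‖) atTop (nhds 0) := by
          have := ((tendsto_zero_iff_norm_tendsto_zero.mp hg0).comp hcomp).const_mul A
          simpa [Function.comp] using this
        exact squeeze_zero_norm hbound htend
    -- split off the dominant term and conclude
    have hsplit := Summable.tsum_eq_add_tsum_ite hsum i₀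
    have hrest : ‖∑' i : ℤ, (if i = i₀ then 0 else f i * g (n - i))‖ ≤ D := by
      apply IsUltrametricDist.norm_tsum_le_of_forall_le_of_nonneg hD0
      intro i
      by_cases h : i = i₀
      · simp [h, hD0]
      · simpa [h] using hD2 i h
    have hmainnorm : ‖f i₀ * g (n - i₀)‖ = ‖f i₀‖ * ‖g j₀‖ := by
      rw [show n - i₀ = j₀ by omega, norm_mul]
    have hfinal : ‖f i₀‖ * ‖g j₀‖ ≤ ‖∑' i : ℤ, f i * g (n - i)‖ := by
      by_contra hcon
      push_neg at hcon
      have hsub : f i₀ * g (n - i₀) = (∑' i : ℤ, f i * g (n - i)) +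
          (-(∑' i : ℤ, (if i = i₀ then 0 else f i * g (n - i)))) := by
        rw [hsplit]; ring
      have hle : ‖f i₀ * g (n - i₀)‖ ≤
          max ‖∑' i : ℤ, f i * g (n - i)‖
            ‖∑' i : ℤ, (if i = i₀ then 0 else f i * g (n - i))‖ := by
        rw [hsub]
        refine (IsUltrametricDist.norm_add_le_max _ _).trans ?_
        rw [norm_neg]
      rw [hmainnorm] at hle
      exact absurd hle (not_le.mpr (max_lt hcon (lt_of_le_of_lt hrest hDlt)))
    exact hcu.trans (hmain.trans_le hfinal)
  exact lt_of_lt_of_le hn (le_ciSup hhbdd n)
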